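/- With the heat-content series setup, λ₁ = sup{ η > 0 : limsup_{n→∞} η^n T_n / n! < ∞ }, where T_n = n! Σ_{λ∈S} a_λ² λ^{-n}. -/

import Mathlib

open MeasureTheory Real Filter

/-- `λ₁ = sup {η > 0 : limsup_n η^n T_n / n! < ∞}` where
`T_n = n! Σ_{λ ∈ S} a_λ² λ^{-n}`. -/
theorem lambda_one_eq_sup_of_moment_growth (S : Set ℝ) (hS : S.Countable)
    (hSpos : ∀ l ∈ S, 0 < l)
    (a : ℝ → ℝ) (ha : ∀ l, 0 ≤ a l) (hsum : Summable fun l : S => a (l : ℝ))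
    (lam1 : ℝ) (hlam : IsLeast S lam1) (hlam1 : 0 < lam1) (hapos : 0 < a lam1)
    (T : ℕ → ℝ)
    (hT : ∀ m : ℕ, T m = (m.factorial : ℝ) * ∑' l : S, a (l : ℝ) * ((l : ℝ)⁻¹) ^ m) :
    lam1 = sSup {η : ℝ | 0 < η ∧
      Filter.limsup (fun m : ℕ => ((η ^ m * T m / (m.factorial : ℝ) : ℝ) : EReal))
        Filter.atTop < ⊤} := by
  set E := {η : ℝ | 0 < η ∧
      Filter.limsup (fun m : ℕ => ((η ^ m * T m / (m.factorial : ℝ) : ℝ) : EReal))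
        Filter.atTop < ⊤} with hE
  -- summability of the terms for every m
  have hsummable : ∀ m : ℕ, Summable (fun l : S => a (l : ℝ) * ((l : ℝ)⁻¹) ^ m) := by
    intro m
    apply Summable.of_nonneg_of_le
      (fun l => mul_nonneg (ha _) (pow_nonneg (inv_nonneg.2 (hSpos _ l.2).le) m))
      (fun l => ?_) (hsum.mul_right (lam1⁻¹ ^ m))
    have hl1 : lam1 ≤ (l : ℝ) := hlam.2 l.2
    have : ((l : ℝ))⁻¹ ≤ lam1⁻¹ := inv_anti₀ hlam1 hl1
    exact mul_le_mul_of_nonneg_left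
      (pow_le_pow_left₀ (inv_nonneg.2 (hSpos _ l.2).le) this m) (ha _)
  -- simplify the quantity
  have hval : ∀ (η : ℝ) (m : ℕ), η ^ m * T m / (m.factorial : ℝ)
      = ∑' l : S, η ^ m * (a (l : ℝ) * ((l : ℝ)⁻¹) ^ m) := by
    intro η m
    rw [hT m, tsum_mul_left]
    have hfac : (m.factorial : ℝ) ≠ 0 := Nat.cast_ne_zero.2 m.factorial_ne_zero
    field_simp
  have hCpos : (0:ℝ) ≤ ∑' l : S, a (l : ℝ) := tsum_nonneg (fun l => ha _)
  have hmem : lam1 ∈ E := by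
    refine ⟨hlam1, ?_⟩
    have hbound : ∀ m : ℕ, lam1 ^ m * T m / (m.factorial : ℝ) ≤ ∑' l : S, a (l : ℝ) := by
      intro m
      rw [hval]
      refine Summable.tsum_le_tsum (fun l => ?_) ((hsummable m).mul_left _) hsum
      have hl1 : lam1 ≤ (l : ℝ) := hlam.2 l.2
      have hlpos : 0 < (l : ℝ) := hSpos _ l.2
      have h1 : lam1 ^ m * ((l : ℝ)⁻¹) ^ m ≤ 1 := by
        rw [← mul_pow]
        apply pow_le_one₀ (mul_nonneg hlam1.le (inv_nonneg.2 hlpos.le))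
        rw [← div_eq_mul_inv]
        exact div_le_one_of_le₀ hl1 hlpos.le
      calc lam1 ^ m * (a (l:ℝ) * ((l:ℝ)⁻¹) ^ m)
          = (lam1 ^ m * ((l:ℝ)⁻¹) ^ m) * a (l:ℝ) := by ring
        _ ≤ 1 * a (l:ℝ) := mul_le_mul_of_nonneg_right h1 (ha _)
        _ = a (l:ℝ) := one_mul _
    have : Filter.limsup (fun m : ℕ =>
        ((lam1 ^ m * T m / (m.factorial : ℝ) : ℝ) : EReal)) Filter.atTop
        ≤ ((∑' l : S, a (l : ℝ) : ℝ) : EReal) := by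
      exact Filter.limsup_le_of_le (by isBoundedDefault)
        (Filter.Eventually.of_forall (fun m => EReal.coe_le_coe_iff.2 (hbound m)))
    exact lt_of_le_of_lt this (EReal.coe_lt_top _)
  have hub : ∀ η ∈ E, η ≤ lam1 := by
    intro η hη
    by_contra hgt
    push_neg at hgt
    obtain ⟨hηpos, hlim⟩ := hη
    -- lower bound: a lam1 * (η/lam1)^m ≤ η^m T m / m!
    have hlow : ∀ m : ℕ, a lam1 * (η / lam1) ^ m ≤ η ^ m * T m / (m.factorial : ℝ) := by
      intro m
      rw [hval]
      have := Summable.le_tsum ((hsummable m).mul_left (η ^ m)) ⟨lam1, hlam.1⟩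
        (fun l _ => mul_nonneg (pow_nonneg hηpos.le m)
          (mul_nonneg (ha _) (pow_nonneg (inv_nonneg.2 (hSpos _ l.2).le) m)))
      refine le_trans (le_of_eq ?_) this
      simp only [div_pow, div_eq_mul_inv, inv_pow]
      ring
    have htend : Filter.Tendsto (fun m : ℕ => a lam1 * (η / lam1) ^ m)
        Filter.atTop Filter.atTop := by
      apply Filter.Tendsto.const_mul_atTop hapos
      exact tendsto_pow_atTop_atTop_of_one_lt ((one_lt_div hlam1).2 hgt)
    have htendE : Filter.Tendsto (fun m : ℕ =>
        ((a lam1 * (η / lam1) ^ m : ℝ) : EReal)) Filter.atTop (nhds ⊤) := by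
      rw [EReal.tendsto_nhds_top_iff_real]
      intro x
      filter_upwards [htend.eventually_gt_atTop x] with m hm
      exact_mod_cast hm
    have hlimtop : Filter.limsup (fun m : ℕ =>
        ((a lam1 * (η / lam1) ^ m : ℝ) : EReal)) Filter.atTop = ⊤ :=
      htendE.limsup_eq
    have : (⊤ : EReal) ≤ Filter.limsup (fun m : ℕ =>
        ((η ^ m * T m / (m.factorial : ℝ) : ℝ) : EReal)) Filter.atTop := by
      rw [← hlimtop]
      exact Filter.limsup_le_limsup (Filter.Eventually.of_forall
        (fun m => EReal.coe_le_coe_iff.2 (hlow m)))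
    exact absurd (lt_of_le_of_lt this hlim) (lt_irrefl _)
  exact (IsGreatest.csSup_eq ⟨hmem, hub⟩).symm
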